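/- arXiv:2403.02355 — 5 statements merged into one kernel-verified Lean document; each statement's English description precedes it below -/
import Mathlib

section
/- Let r be a nonzero purely imaginary quaternion (Re(r) = 0 and r ≠ 0). Then there exist quaternions h and t such that (h ⊗ r) · t ≠ (t ⊗ r) · h. (Proposition 2: TQuatE can model the asymmetric relation pattern when the real part of the relation embedding is zero.) -/
open Quaternion

/-- The dot product of two quaternions: the sum of the products of their
real and three imaginary components. -/
noncomputable def qdot (q₁ q₂ : ℍ[ℝ]) : ℝ :=
  q₁.re * q₂.re + q₁.imI * q₂.imI + q₁.imJ * q₂.imJ + q₁.imK * q₂.imK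

theorem asymmetric_pattern_scalar (r : ℍ[ℝ]) (hre : r.re = 0) (hne : r ≠ 0) :
    ∃ h t : ℍ[ℝ], qdot (h * r) t ≠ qdot (t * r) h := by
  refine ⟨1, r, ?_⟩
  have h0 : r.imI ≠ 0 ∨ r.imJ ≠ 0 ∨ r.imK ≠ 0 := by
    by_contra hc
    push_neg at hc
    exact hne (Quaternion.ext_iff.mpr ⟨hre, hc.1, hc.2.1, hc.2.2⟩)
  simp only [qdot, one_mul, Quaternion.re_mul, Quaternion.imI_mul,
    Quaternion.imJ_mul, Quaternion.imK_mul, Quaternion.re_one,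
    Quaternion.imI_one, Quaternion.imJ_one, Quaternion.imK_one, hre]
  intro heq
  rcases h0 with h | h | h <;> nlinarith [sq_nonneg r.imI, sq_nonneg r.imJ, sq_nonneg r.imK, pow_pos (abs_pos.mpr h) 2, sq_abs r.imI, sq_abs r.imJ, sq_abs r.imK]
end

section
/- Let d be a natural number and let r : Fin d → ℍ be a quaternion vector with Re(r i) = 0 for all i and with r j ≠ 0 for some j. Then there exist quaternion vectors h, t : Fin d → ℍ such that ∑_{i} ((h i ⊗ r i) · (t i)) ≠ ∑_{i} ((t i ⊗ r i) · (h i)). (Vector form of Proposition 2.) -/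
open Quaternion

theorem asymmetric_pattern_vector (d : ℕ) (r : Fin d → ℍ[ℝ])
    (hre : ∀ i, (r i).re = 0) (hne : ∃ j, r j ≠ 0) :
    ∃ h t : Fin d → ℍ[ℝ],
      ∑ i, qdot (h i * r i) (t i) ≠ ∑ i, qdot (t i * r i) (h i) := by
  obtain ⟨j, hj⟩ := hne
  refine ⟨fun i => if i = j then 1 else 0, fun i => if i = j then star (r j) else 0, ?_⟩
  have hsum1 : ∑ i, qdot ((if i = j then (1:ℍ[ℝ]) else 0) * r i)
      (if i = j then star (r j) else 0) = qdot (r j) (star (r j)) := by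
    rw [Finset.sum_eq_single j]
    · simp
    · intro b _ hb; simp [hb, qdot]
    · simp
  have hsum2 : ∑ i, qdot ((if i = j then star (r j) else 0) * r i)
      (if i = j then (1:ℍ[ℝ]) else 0) = qdot (star (r j) * r j) 1 := by
    rw [Finset.sum_eq_single j]
    · simp
    · intro b _ hb; simp [hb, qdot]
    · simp
  rw [hsum1, hsum2]
  have h0 : (r j).re = 0 := hre j
  have hpos : 0 < (r j).imI ^ 2 + (r j).imJ ^ 2 + (r j).imK ^ 2 := by
    rcases lt_or_eq_of_le (by positivity : (0:ℝ) ≤ (r j).imI ^ 2 + (r j).imJ ^ 2 + (r j).imK ^ 2) with h | h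
    · exact h
    · exfalso; apply hj
      ext <;> simp <;> nlinarith [sq_nonneg (r j).imI, sq_nonneg (r j).imJ, sq_nonneg (r j).imK]
  simp only [qdot, Quaternion.re_mul, Quaternion.re_star, Quaternion.imI_star,
    Quaternion.imJ_star, Quaternion.imK_star, Quaternion.re_one, Quaternion.imI_one,
    Quaternion.imJ_one, Quaternion.imK_one, h0]
  nlinarith
end

section
/- Let d be a natural number and let h, r₁, r₂, t : Fin d → ℍ be quaternion vectors such that r₂ i = conj(r₁ i) for all i. Then ∑_{i} ((h i ⊗ r₁ i) · (t i)) = ∑_{i} ((t i ⊗ r₂ i) · (h i)). (Vector form of Proposition 3: the score of (h, r₁, t) equals the score of (t, r₂, h) when r₂ is the componentwise conjugate of r₁.) -/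
open Quaternion

lemma qdot_key (a b c : ℍ[ℝ]) : qdot (a * b) c = qdot (c * star b) a := by
  simp [qdot, Quaternion.re_mul, Quaternion.imI_mul, Quaternion.imJ_mul,
    Quaternion.imK_mul]
  ring

theorem inverse_pattern_vector (d : ℕ) (h r₁ r₂ t : Fin d → ℍ[ℝ])
    (hconj : ∀ i, r₂ i = star (r₁ i)) :
    ∑ i, qdot (h i * r₁ i) (t i) = ∑ i, qdot (t i * r₂ i) (h i) := by
  refine Finset.sum_congr rfl fun i _ => ?_
  rw [hconj i, qdot_key]
end

section
/- Let τ be a unit quaternion (‖τ‖ = 1). Then for all quaternions h, r, t: (h ⊗ (τ ⊗ r ⊗ conj(τ))) · t = (t ⊗ (τ ⊗ conj(r) ⊗ conj(τ))) · h. (Inverse relation pattern for the full time-aware model: the TQuatE score of (h, r, t) at timestamp τ equals the score of (t, conj(r), h) at the same timestamp.) -/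
open Quaternion

lemma qdot_eq (a b : ℍ[ℝ]) : qdot a b = (a * star b).re := by
  simp [qdot, Quaternion.re_mul, Quaternion.re_star, Quaternion.imI_star,
    Quaternion.imJ_star, Quaternion.imK_star]


theorem inverse_pattern_time_aware (τ : ℍ[ℝ]) (hτ : ‖τ‖ = 1) (h r t : ℍ[ℝ]) :
    qdot (h * (τ * r * star τ)) t = qdot (t * (τ * star r * star τ)) h := by
  rw [qdot_eq, qdot_eq]
  have : t * (τ * star r * star τ) * star h = star (h * (τ * r * star τ) * star t) := by
    simp [mul_assoc, star_mul]
  rw [this, Quaternion.re_star]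
end

section
/- Let d be a natural number, let τ₁, τ₂ : Fin d → ℍ be vectors of unit quaternions (‖τ₁ i‖ = 1 and ‖τ₂ i‖ = 1 for all i), and let r₁, r₂ : Fin d → ℍ be quaternion vectors such that for every i, r₂ i = (conj(τ₂ i) ⊗ τ₁ i) ⊗ r₁ i ⊗ conj(conj(τ₂ i) ⊗ τ₁ i). Then for every i, τ₁ i ⊗ r₁ i ⊗ conj(τ₁ i) = τ₂ i ⊗ r₂ i ⊗ conj(τ₂ i), and consequently for all quaternion vectors h, t : Fin d → ℍ, ∑_{i} ((h i ⊗ (τ₁ i ⊗ r₁ i ⊗ conj(τ₁ i))) · (t i)) = ∑_{i} ((h i ⊗ (τ₂ i ⊗ r₂ i ⊗ conj(τ₂ i))) · (t i)). (Vector form of Proposition 5: evolutionary relations yield equal TQuatE scores.) -/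
open Quaternion

theorem evolutionary_pattern_vector (d : ℕ) (τ₁ τ₂ : Fin d → ℍ[ℝ])
    (hτ₁ : ∀ i, ‖τ₁ i‖ = 1) (hτ₂ : ∀ i, ‖τ₂ i‖ = 1) (r₁ r₂ : Fin d → ℍ[ℝ])
    (hr : ∀ i, r₂ i = (star (τ₂ i) * τ₁ i) * r₁ i * star (star (τ₂ i) * τ₁ i)) :
    (∀ i, τ₁ i * r₁ i * star (τ₁ i) = τ₂ i * r₂ i * star (τ₂ i)) ∧
    ∀ h t : Fin d → ℍ[ℝ],
      ∑ i, qdot (h i * (τ₁ i * r₁ i * star (τ₁ i))) (t i) =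
      ∑ i, qdot (h i * (τ₂ i * r₂ i * star (τ₂ i))) (t i) := by
  have key : ∀ i, τ₁ i * r₁ i * star (τ₁ i) = τ₂ i * r₂ i * star (τ₂ i) := by
    intro i
    have h2 : τ₂ i * star (τ₂ i) = 1 := by
      rw [Quaternion.self_mul_star,
        show Quaternion.normSq (τ₂ i) = ‖τ₂ i‖ ^ 2 from by
          rw [Quaternion.normSq_eq_norm_mul_self]; ring, hτ₂ i]
      norm_num
    rw [hr i]
    simp only [star_mul, star_star]
    have : τ₂ i * (star (τ₂ i) * τ₁ i * r₁ i * (star (τ₁ i) * τ₂ i)) * star (τ₂ i)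
        = (τ₂ i * star (τ₂ i)) * (τ₁ i * r₁ i * star (τ₁ i)) * (τ₂ i * star (τ₂ i)) := by
      simp only [mul_assoc]
    rw [this, h2, one_mul, mul_one]
  refine ⟨key, fun h t => ?_⟩
  exact Finset.sum_congr rfl fun i _ => by rw [key i]
end
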